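/- For every n ≥ 2, if A and B are subsets of P both satisfying condition (H1) in the incidence geometry G_n and A is a proper subset of B, then (3/8)·4^n ≤ |B \ A|. -/

import Mathlib

/-- The symplectic vector space `V_n = (ZMod 2)^(2n)` of the n-qubit real Pauli group. -/
abbrev V (n : ℕ) : Type := Fin (2 * n) → ZMod 2

/-- The index `2i-1` (0-based: `2i`). -/
def i0 {n : ℕ} (i : Fin n) : Fin (2 * n) := ⟨2 * i.1, by have := i.isLt; omega⟩

/-- The index `2i` (0-based: `2i+1`). -/
def i1 {n : ℕ} (i : Fin n) : Fin (2 * n) := ⟨2 * i.1 + 1, by have := i.isLt; omega⟩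

/-- The symplectic form `⟨x,y⟩ = Σ_{i=1}^n (x_{2i−1} y_{2i} + x_{2i} y_{2i−1})`. -/
def sform {n : ℕ} (x y : V n) : ZMod 2 :=
  ∑ i : Fin n, (x (i0 i) * y (i1 i) + x (i1 i) * y (i0 i))

/-- The point set `P = V_n \ {0}` of the incidence geometry `G_n`. -/
def P (n : ℕ) : Set (V n) := {x | x ≠ 0}

/-- The line set `L = {{a,b,a+b} : a,b ∈ P, a ≠ b, ⟨a,b⟩ = 0}` of `G_n`. -/
def Lines (n : ℕ) : Set (Set (V n)) :=
  {l | ∃ a b : V n, a ∈ P n ∧ b ∈ P n ∧ a ≠ b ∧ sform a b = 0 ∧ l = {a, b, a + b}}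

/-- A subset `H ⊆ P` satisfies condition (H1) if every line meets it in exactly
one point or is contained in it. -/
def IsH1 {n : ℕ} (H : Set (V n)) : Prop :=
  H ⊆ P n ∧ ∀ l ∈ Lines n, (H ∩ l).ncard = 1 ∨ l ⊆ H

/-- A geometric hyperplane: a subset satisfying (H1) which is not the full point set. -/
def IsHyperplane {n : ℕ} (H : Set (V n)) : Prop := IsH1 H ∧ H ≠ P n

/-- `A ⊞ B`: the complement in `P` of the symmetric difference of `A` and `B`. -/
def boxAdd {n : ℕ} (A B : Set (V n)) : Set (V n) := P n \ (symmDiff A B)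

/-- The quadratic form `Q_0(x) = Σ_{i=1}^n x_{2i−1} x_{2i}`. -/
def Q0 {n : ℕ} (x : V n) : ZMod 2 := ∑ i : Fin n, x (i0 i) * x (i1 i)

/-- The quadratic form `Q_p(x) = Q_0(x) + ⟨p,x⟩`. -/
def Qf {n : ℕ} (p x : V n) : ZMod 2 := Q0 x + sform p x

/-- The perp-set hyperplane `C_p = {x ∈ P : ⟨p,x⟩ = 0}`. -/
def Cset {n : ℕ} (p : V n) : Set (V n) := {x ∈ P n | sform p x = 0}

/-- The quadric hyperplane `H_p = {x ∈ P : Q_p(x) = 0}`. -/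
def Hset {n : ℕ} (p : V n) : Set (V n) := {x ∈ P n | Qf p x = 0}

/-- The symplectic transvection `t_p : x ↦ x + ⟨p,x⟩·p`. -/
def tv {n : ℕ} (p : V n) (x : V n) : V n := x + sform p x • p


open Finset

lemma aux_sform_comm {n : ℕ} (x y : V n) : sform x y = sform y x := by
  unfold sform; apply Finset.sum_congr rfl; intros; ring

lemma aux_sform_add_right {n : ℕ} (x y z : V n) :
    sform x (y + z) = sform x y + sform x z := by
  unfold sform
  rw [← Finset.sum_add_distrib]
  apply Finset.sum_congr rfl; intros; simp [Pi.add_apply]; ring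

lemma aux_sform_add_left {n : ℕ} (x y z : V n) :
    sform (x + y) z = sform x z + sform y z := by
  rw [aux_sform_comm, aux_sform_add_right, aux_sform_comm z x, aux_sform_comm z y]

lemma aux_sform_self {n : ℕ} (x : V n) : sform x x = 0 := by
  unfold sform
  apply Finset.sum_eq_zero; intro i _
  have : ∀ u v : ZMod 2, u * v + v * u = 0 := by decide
  exact this _ _

lemma aux_sform_zero_left {n : ℕ} (y : V n) : sform 0 y = 0 := by
  unfold sform; apply Finset.sum_eq_zero; intro i _; simp

lemma aux_vadd_self {n : ℕ} (v : V n) : v + v = 0 := by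
  funext j
  exact (by decide : ∀ u : ZMod 2, u + u = 0) (v j)

lemma aux_Q0_add {n : ℕ} (a b : V n) : Q0 (a + b) = Q0 a + Q0 b + sform a b := by
  unfold Q0 sform
  rw [← Finset.sum_add_distrib, ← Finset.sum_add_distrib]
  apply Finset.sum_congr rfl; intros; simp [Pi.add_apply]; ring

def E {n : ℕ} (j : Fin (2 * n)) : V n := fun k => if k = j then 1 else 0

lemma aux_i0_ne_i1 {n : ℕ} (i i' : Fin n) : i0 i ≠ i1 i' := by
  intro h
  have := congrArg Fin.val h
  simp [i0, i1] at this; omega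

lemma aux_s_e1 {n : ℕ} (a : V n) (i : Fin n) : sform a (E (i1 i)) = a (i0 i) := by
  unfold sform
  rw [Finset.sum_eq_single i]
  · simp [E, aux_i0_ne_i1]
  · intro i' _ hne
    have h1 : i1 i' ≠ i1 i := by
      intro h; apply hne; have := congrArg Fin.val h; simp [i1] at this; exact Fin.ext (by omega)
    simp [E, h1, aux_i0_ne_i1]
  · simp

lemma aux_s_e0 {n : ℕ} (a : V n) (i : Fin n) : sform a (E (i0 i)) = a (i1 i) := by
  unfold sform
  rw [Finset.sum_eq_single i]
  · simp [E, (aux_i0_ne_i1 i i).symm, Ne.symm (aux_i0_ne_i1 i i)]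
  · intro i' _ hne
    have h1 : i0 i' ≠ i0 i := by
      intro h; apply hne; have := congrArg Fin.val h; simp [i0] at this; exact Fin.ext (by omega)
    simp [E, h1, Ne.symm (aux_i0_ne_i1 i i')]
  · simp

lemma aux_exists_pair {n : ℕ} (a : V n) (ha : a ≠ 0) : ∃ y : V n, sform a y = 1 := by
  have : ∃ j, a j ≠ 0 := by
    by_contra h
    push_neg at h
    exact ha (funext fun j => h j)
  obtain ⟨j, hj⟩ := this
  have hj1 : a j = 1 := by
    revert hj; generalize a j = u; revert u; decide
  have hlt : j.1 / 2 < n := by have := j.isLt; omega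
  set i : Fin n := ⟨j.1 / 2, hlt⟩
  by_cases hp : j.1 % 2 = 0
  · refine ⟨E (i1 i), ?_⟩
    rw [aux_s_e1]
    have : i0 i = j := Fin.ext (by simp [i0, i]; omega)
    rw [this, hj1]
  · refine ⟨E (i0 i), ?_⟩
    rw [aux_s_e0]
    have : i1 i = j := Fin.ext (by simp [i1, i]; omega)
    rw [this, hj1]
open Classical in
noncomputable def ind {n : ℕ} (S : Set (V n)) (x : V n) : ZMod 2 :=
  if x ∈ S then 1 else 0

lemma ind_of_mem {n : ℕ} {S : Set (V n)} {x : V n} (h : x ∈ S) : ind S x = 1 := by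
  simp [ind, h]

lemma ind_of_not_mem {n : ℕ} {S : Set (V n)} {x : V n} (h : x ∉ S) : ind S x = 0 := by
  simp [ind, h]

lemma aux_parity {n : ℕ} {S : Set (V n)} (hS : IsH1 S) {a b : V n}
    (ha : a ≠ 0) (hb : b ≠ 0) (hab : a ≠ b) (hs : sform a b = 0) :
    ind S a + ind S b + ind S (a + b) = 1 := by
  classical
  have hl : ({a, b, a + b} : Set (V n)) ∈ Lines n := ⟨a, b, ha, hb, hab, hs, rfl⟩
  have hca : a + b ≠ a := fun h => hb (add_left_cancel (h.trans (add_zero a).symm))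
  have hcb : a + b ≠ b := fun h => ha (add_right_cancel (h.trans (zero_add b).symm))
  have hc0 : a + b ≠ 0 := by
    intro h
    apply hab
    have := congrArg (· + b) h
    simp only [zero_add] at this
    rw [add_assoc, aux_vadd_self, add_zero] at this
    exact this
  rcases hS.2 _ hl with h1 | h3
  · obtain ⟨x, hx⟩ := Set.ncard_eq_one.mp h1
    have hxl : x = a ∨ x = b ∨ x = a + b := by
      have h' : x ∈ S ∩ {a, b, a + b} := hx ▸ rfl
      simpa [Set.mem_insert_iff] using h'.2
    have hmem : ∀ y ∈ ({a, b, a + b} : Set (V n)), (y ∈ S ↔ y = x) := by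
      intro y hy
      constructor
      · intro hyS
        have : y ∈ S ∩ {a, b, a + b} := ⟨hyS, hy⟩
        rw [hx] at this; exact this
      · intro hyx
        rw [hyx]
        have h' : x ∈ S ∩ {a, b, a + b} := hx ▸ rfl
        exact h'.1
    rcases hxl with rfl | rfl | rfl
    · rw [ind_of_mem ((hmem _ (by simp)).mpr rfl),
        ind_of_not_mem (fun h => hab ((hmem b (by simp)).mp h).symm),
        ind_of_not_mem (fun h => hca ((hmem _ (by simp)).mp h))]
      decide
    · rw [ind_of_mem ((hmem _ (by simp)).mpr rfl),
        ind_of_not_mem (fun h => hab ((hmem a (by simp)).mp h)),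
        ind_of_not_mem (fun h => hcb ((hmem _ (by simp)).mp h))]
      decide
    · rw [ind_of_mem ((hmem _ (by simp)).mpr rfl),
        ind_of_not_mem (fun h => hca (((hmem a (by simp)).mp h).symm)),
        ind_of_not_mem (fun h => hcb (((hmem b (by simp)).mp h).symm))]
      decide
  · rw [ind_of_mem (h3 (by simp)), ind_of_mem (h3 (by simp)),
      ind_of_mem (h3 (by simp : a + b ∈ ({a,b,a+b} : Set (V n))))]
    decide

lemma aux_hf {n : ℕ} {A B : Set (V n)} (hA : IsH1 A) (hB : IsH1 B) (hsub : A ⊆ B) :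
    ∀ a b : V n, sform a b = 0 →
      ind (B \ A) (a + b) = ind (B \ A) a + ind (B \ A) b := by
  classical
  have hind : ∀ x, ind (B \ A) x = ind B x + ind A x := by
    intro x
    by_cases hxA : x ∈ A
    · rw [ind_of_not_mem (show x ∉ B \ A from fun h => h.2 hxA),
        ind_of_mem (hsub hxA), ind_of_mem hxA]
      decide
    · by_cases hxB : x ∈ B
      · rw [ind_of_mem (show x ∈ B \ A from ⟨hxB, hxA⟩), ind_of_mem hxB,
          ind_of_not_mem hxA]
        decide
      · rw [ind_of_not_mem (show x ∉ B \ A from fun h => hxB h.1),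
          ind_of_not_mem hxB, ind_of_not_mem hxA]
        decide
  have ind0 : ind (B \ A) 0 = 0 :=
    ind_of_not_mem (show (0 : V n) ∉ B \ A from fun h => (hB.1 h.1) rfl)
  intro a b hs
  by_cases ha : a = 0
  · subst ha; rw [zero_add, ind0, zero_add]
  by_cases hb : b = 0
  · subst hb; rw [add_zero, ind0, add_zero]
  by_cases hab : a = b
  · subst hab
    rw [aux_vadd_self, ind0]
    exact ((by decide : ∀ u : ZMod 2, (0 : ZMod 2) = u + u) _)
  have hpA := aux_parity hA ha hb hab hs
  have hpB := aux_parity hB ha hb hab hs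
  rw [hind (a+b), hind a, hind b]
  have key : ∀ pa pb pc qa qb qc : ZMod 2,
      qa + qb + qc = 1 → pa + pb + pc = 1 →
      pc + qc = (pa + qa) + (pb + qb) := by decide
  exact key _ _ _ _ _ _ hpA hpB

section Classify
variable {n : ℕ} (f : V n → ZMod 2)

lemma aux_factB (hf : ∀ a b : V n, sform a b = 0 → f (a + b) = f a + f b)
    {a b b' : V n} (hbb' : sform b b' = 0) (he : sform a b = sform a b') :
    f (a + b) + f a + f b = f (a + b') + f a + f b' := by
  have hperp : sform (a + b) (a + b') = 0 := by
    rw [aux_sform_add_left, aux_sform_add_right, aux_sform_add_right,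
      aux_sform_self, aux_sform_comm b a, he, hbb']
    exact (by decide : ∀ u : ZMod 2, 0 + u + (u + 0) = 0) _
  have h1 := hf _ _ hperp
  have harg : (a + b) + (a + b') = b + b' := by
    have h2 : (a + b) + (a + b') = (a + a) + (b + b') := by abel
    rw [h2, aux_vadd_self, zero_add]
  rw [harg, hf b b' hbb'] at h1
  have key : ∀ x y u v w : ZMod 2, u + v = x + y → x + w + u = y + w + v := by decide
  exact key _ _ _ _ _ h1

lemma aux_step1 (hf : ∀ a b : V n, sform a b = 0 → f (a + b) = f a + f b)
    {a b b' : V n} (h1 : sform a b = 1) (h2 : sform a b' = 1) :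
    f (a + b) + f a + f b = f (a + b') + f a + f b' := by
  by_cases hbb' : sform b b' = 0
  · exact aux_factB f hf hbb' (h1.trans h2.symm)
  · have hbb1 : sform b b' = 1 := by
      revert hbb'; generalize sform b b' = u; revert u; decide
    have hs1 : sform b (a + b') = 0 := by
      rw [aux_sform_add_right, aux_sform_comm b a, h1, hbb1]; decide
    have hs2 : sform a b = sform a (a + b') := by
      rw [aux_sform_add_right, aux_sform_self, zero_add, h1, h2]
    have h3 := aux_factB f hf hs1 hs2
    have harg : a + (a + b') = b' := by
      rw [← add_assoc, aux_vadd_self, zero_add]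
    rw [harg] at h3
    rw [h3]; ring

lemma aux_pair2 {a a' : V n} (ha : a ≠ 0) (ha' : a' ≠ 0) :
    ∃ w : V n, sform a w = 1 ∧ sform a' w = 1 := by
  obtain ⟨y, hy⟩ := aux_exists_pair a ha
  obtain ⟨y', hy'⟩ := aux_exists_pair a' ha'
  by_cases h1 : sform a' y = 1
  · exact ⟨y, hy, h1⟩
  by_cases h2 : sform a y' = 1
  · exact ⟨y', h2, hy'⟩
  have h1' : sform a' y = 0 := by revert h1; generalize sform a' y = u; revert u; decide
  have h2' : sform a y' = 0 := by revert h2; generalize sform a y' = u; revert u; decide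
  refine ⟨y + y', ?_, ?_⟩
  · rw [aux_sform_add_right, hy, h2', add_zero]
  · rw [aux_sform_add_right, h1', hy', zero_add]

lemma aux_chain (hf : ∀ a b : V n, sform a b = 0 → f (a + b) = f a + f b)
    {a b a' b' : V n} (h1 : sform a b = 1) (h2 : sform a' b' = 1) :
    f (a + b) + f a + f b = f (a' + b') + f a' + f b' := by
  have ha : a ≠ 0 := by
    intro h; rw [h, aux_sform_zero_left] at h1; exact absurd h1 (by decide)
  have ha' : a' ≠ 0 := by
    intro h; rw [h, aux_sform_zero_left] at h2; exact absurd h2 (by decide)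
  obtain ⟨w, hw, hw'⟩ := aux_pair2 ha ha'
  have e1 := aux_step1 f hf h1 hw
  have e2 := aux_step1 f hf (by rw [aux_sform_comm]; exact hw)
    (by rw [aux_sform_comm]; exact hw' : sform w a' = 1)
  have e3 := aux_step1 f hf hw' h2
  rw [e1]
  calc f (a + w) + f a + f w
      = f (w + a) + f w + f a := by rw [add_comm a w]; ring
    _ = f (w + a') + f w + f a' := e2
    _ = f (a' + w) + f a' + f w := by rw [add_comm w a']; ring
    _ = f (a' + b') + f a' + f b' := e3

lemma aux_dichotomy (hn : 0 < n)
    (hf : ∀ a b : V n, sform a b = 0 → f (a + b) = f a + f b) :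
    (∀ a b : V n, f (a + b) = f a + f b) ∨
    (∀ a b : V n, f (a + b) = f a + f b + sform a b) := by
  set E0 : V n := E (i0 ⟨0, hn⟩)
  set E1 : V n := E (i1 ⟨0, hn⟩)
  have hE : sform E0 E1 = 1 := by
    rw [aux_s_e1]
    simp [E0, E]
  set c : ZMod 2 := f (E0 + E1) + f E0 + f E1 with hc
  have hg : ∀ a b : V n, sform a b = 1 → f (a + b) + f a + f b = c :=
    fun a b h => aux_chain f hf h hE
  by_cases hc0 : c = 0
  · left
    intro a b
    by_cases hs : sform a b = 0
    · exact hf a b hs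
    · have hs1 : sform a b = 1 := by
        revert hs; generalize sform a b = u; revert u; decide
      have := (hg a b hs1).trans hc0
      revert this
      generalize f (a+b) = x; generalize f a = u; generalize f b = v
      revert x u v; decide
  · right
    have hc1 : c = 1 := by revert hc0; generalize c = u; revert u; decide
    intro a b
    by_cases hs : sform a b = 0
    · rw [hs, add_zero]; exact hf a b hs
    · have hs1 : sform a b = 1 := by
        revert hs; generalize sform a b = u; revert u; decide
      rw [hs1]
      have := (hg a b hs1).trans hc1
      revert this
      generalize f (a+b) = x; generalize f a = u; generalize f b = v
      revert x u v; decide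

lemma aux_expand (h : V n → ZMod 2) (hadd : ∀ a b : V n, h (a + b) = h a + h b) :
    ∀ x : V n, h x = ∑ j, x j * h (E j) := by
  intro x
  have hx : x = ∑ j : Fin (2*n), x j • E j := by
    funext k
    rw [Finset.sum_apply]
    have : ∀ j, (x j • E j) k = if k = j then x j else 0 := by
      intro j; simp [E, Pi.smul_apply, smul_eq_mul, mul_ite]
    simp only [this]
    rw [Finset.sum_ite_eq]
    simp
  let φ : V n →+ ZMod 2 := AddMonoidHom.mk' h hadd
  have : h x = φ x := rfl
  rw [this]
  conv_lhs => rw [hx]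
  rw [map_sum]
  apply Finset.sum_congr rfl
  intro j _
  show h (x j • E j) = x j * h (E j)
  rcases (by decide : ∀ u : ZMod 2, u = 0 ∨ u = 1) (x j) with h0 | h0 <;> rw [h0]
  · rw [zero_smul, zero_mul]
    exact φ.map_zero
  · rw [one_smul, one_mul]

end Classify

section Counting
open Finset

def pairEquiv {n : ℕ} : Fin n × Fin 2 ≃ Fin (2 * n) where
  toFun p := ⟨2 * p.1.1 + p.2.1, by have := p.1.isLt; have := p.2.isLt; omega⟩
  invFun j := (⟨j.1 / 2, by have := j.isLt; omega⟩, ⟨j.1 % 2, by omega⟩)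
  left_inv p := by
    ext
    · simp; omega
    · simp; omega
  right_inv j := by
    ext
    simp; omega

lemma aux_sum_pairs {M : Type*} [AddCommMonoid M] {n : ℕ} (F : Fin (2 * n) → M) :
    ∑ j, F j = ∑ i : Fin n, (F (i0 i) + F (i1 i)) := by
  rw [← Equiv.sum_comp (pairEquiv (n := n)) F]
  rw [Fintype.sum_prod_type]
  apply Finset.sum_congr rfl
  intro i _
  rw [Fin.sum_univ_two]
  have e0 : pairEquiv (i, 0) = i0 i := by
    apply Fin.ext; simp [pairEquiv, i0]
  have e1 : pairEquiv (i, 1) = i1 i := by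
    apply Fin.ext; simp [pairEquiv, i1]
  rw [e0, e1]

def eqv {n : ℕ} : (V n) ≃ (Fin n → ZMod 2 × ZMod 2) where
  toFun x i := (x (i0 i), x (i1 i))
  invFun w j :=
    if j.1 % 2 = 0 then (w ⟨j.1 / 2, by have := j.isLt; omega⟩).1
    else (w ⟨j.1 / 2, by have := j.isLt; omega⟩).2
  left_inv x := by
    funext j
    dsimp only
    by_cases h : j.1 % 2 = 0
    · rw [if_pos h]
      have hj : i0 (⟨j.1 / 2, by have := j.isLt; omega⟩ : Fin n) = j := by
        apply Fin.ext; simp [i0]; omega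
      exact congrArg x hj
    · rw [if_neg h]
      have hj : i1 (⟨j.1 / 2, by have := j.isLt; omega⟩ : Fin n) = j := by
        apply Fin.ext; simp [i1]; omega
      exact congrArg x hj
  right_inv w := by
    funext i
    have h0 : (i0 i).1 % 2 = 0 := by simp [i0]
    have h1 : ¬ (i1 i).1 % 2 = 0 := by simp [i1]
    have g0 : (⟨(i0 i).1 / 2, by have := (i0 i).isLt; omega⟩ : Fin n) = i := by
      apply Fin.ext; simp [i0]
    have g1 : (⟨(i1 i).1 / 2, by have := (i1 i).isLt; omega⟩ : Fin n) = i := by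
      apply Fin.ext; simp [i1]; omega
    show (if (i0 i).1 % 2 = 0 then _ else _, if (i1 i).1 % 2 = 0 then _ else _) = w i
    rw [if_pos h0, if_neg h1]
    rw [show (⟨(i0 i).1 / 2, _⟩ : Fin n) = i from g0,
      show (⟨(i1 i).1 / 2, _⟩ : Fin n) = i from g1]

def χ (u : ZMod 2) : ℤ := 1 - 2 * u.val

lemma χ_hom : ∀ u v : ZMod 2, χ (u + v) = χ u * χ v := by decide

lemma χ_sum {ι : Type*} (s : Finset ι) (t : ι → ZMod 2) :
    χ (∑ i ∈ s, t i) = ∏ i ∈ s, χ (t i) := by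
  induction s using Finset.cons_induction with
  | empty => simp; decide
  | cons a s ha ih => rw [Finset.sum_cons, Finset.prod_cons, χ_hom, ih]

lemma aux_count {n : ℕ} (f : V n → ZMod 2) (δ : ZMod 2) (C : Fin (2 * n) → ZMod 2)
    (hf : ∀ x, f x = δ * Q0 x + ∑ j, x j * C j)
    (hnz : ∃ x, f x ≠ 0) :
    4 ^ n ≤ 2 * (Finset.univ.filter (fun x : V n => f x = 1)).card + 2 ^ n := by
  classical
  set N := (Finset.univ.filter (fun x : V n => f x = 1)).card with hN
  set g : Fin n → ZMod 2 → ZMod 2 → ℤ :=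
    fun i u v => χ (δ * (u * v) + (u * C (i0 i) + v * C (i1 i))) with hg
  have hsplit : ∀ x : V n, χ (f x) = ∏ i : Fin n, g i (x (i0 i)) (x (i1 i)) := by
    intro x
    rw [hf x]
    have hq : δ * Q0 x + ∑ j, x j * C j
        = ∑ i : Fin n, (δ * (x (i0 i) * x (i1 i)) + (x (i0 i) * C (i0 i) + x (i1 i) * C (i1 i))) := by
      rw [Q0, Finset.mul_sum, aux_sum_pairs (fun j => x j * C j), ← Finset.sum_add_distrib]
    rw [hq, χ_sum]
  have hS : ∑ x : V n, χ (f x) = ∏ i : Fin n, ∑ p : ZMod 2 × ZMod 2, g i p.1 p.2 := by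
    calc ∑ x : V n, χ (f x)
        = ∑ w : Fin n → ZMod 2 × ZMod 2, ∏ i : Fin n, g i (w i).1 (w i).2 := by
          apply Fintype.sum_equiv eqv
          intro x
          rw [hsplit x]
          rfl
      _ = ∏ i : Fin n, ∑ p : ZMod 2 × ZMod 2, g i p.1 p.2 := by
          rw [Finset.prod_univ_sum]
          rw [Fintype.piFinset_univ]
  have hcard : (Fintype.card (V n) : ℤ) = 4 ^ n := by
    rw [Fintype.card_fun, ZMod.card, Fintype.card_fin]
    push_cast
    rw [pow_mul]
    norm_num
  have hSN : ∑ x : V n, χ (f x) = 4 ^ n - 2 * N := by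
    have : ∀ x : V n, χ (f x) = 1 - 2 * (if f x = 1 then (1:ℤ) else 0) := by
      intro x
      have : ∀ u : ZMod 2, χ u = 1 - 2 * (if u = 1 then (1:ℤ) else 0) := by decide
      exact this _
    rw [Finset.sum_congr rfl (fun x _ => this x), Finset.sum_sub_distrib]
    rw [← Finset.mul_sum, Finset.sum_boole, Finset.sum_const, Finset.card_univ]
    simp only [nsmul_eq_mul, mul_one]
    rw [hcard]
  have hupper : ∑ x : V n, χ (f x) ≤ 2 ^ n := by
    rw [hS]
    rcases (by decide : ∀ u : ZMod 2, u = 0 ∨ u = 1) δ with hδ | hδ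
    · -- linear case: some C j ≠ 0, so one factor is zero
      have hCnz : ∃ j, C j ≠ 0 := by
        by_contra h
        push_neg at h
        obtain ⟨x, hx⟩ := hnz
        apply hx
        rw [hf x, hδ, zero_mul, zero_add]
        apply Finset.sum_eq_zero
        intro j _
        rw [h j, mul_zero]
      obtain ⟨j, hj⟩ := hCnz
      have hlt : j.1 / 2 < n := by have := j.isLt; omega
      set i : Fin n := ⟨j.1 / 2, hlt⟩ with hi
      have hzero : ∑ p : ZMod 2 × ZMod 2, g i p.1 p.2 = 0 := by
        have key : ∀ α β : ZMod 2, (α ≠ 0 ∨ β ≠ 0) →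
            ∑ p : ZMod 2 × ZMod 2, χ ((0:ZMod 2) * (p.1 * p.2) + (p.1 * α + p.2 * β)) = 0 := by
          decide
        have hij : C (i0 i) ≠ 0 ∨ C (i1 i) ≠ 0 := by
          by_cases hp : j.1 % 2 = 0
          · left
            have : i0 i = j := by ext; simp [i0, hi]; omega
            rwa [this]
          · right
            have : i1 i = j := by ext; simp [i1, hi]; omega
            rwa [this]
        simp only [hg, hδ]
        exact key _ _ hij
      rw [Finset.prod_eq_zero (Finset.mem_univ i) hzero]
      positivity
    · -- quadratic case: each factor has absolute value ≤ 2
      have habs : ∀ i : Fin n, |∑ p : ZMod 2 × ZMod 2, g i p.1 p.2| ≤ 2 := by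
        intro i
        have key : ∀ α β : ZMod 2,
            |∑ p : ZMod 2 × ZMod 2, χ ((1:ZMod 2) * (p.1 * p.2) + (p.1 * α + p.2 * β))| ≤ 2 := by
          decide
        simp only [hg, hδ]
        exact key _ _
      calc ∏ i : Fin n, ∑ p : ZMod 2 × ZMod 2, g i p.1 p.2
          ≤ |∏ i : Fin n, ∑ p : ZMod 2 × ZMod 2, g i p.1 p.2| := le_abs_self _
        _ = ∏ i : Fin n, |∑ p : ZMod 2 × ZMod 2, g i p.1 p.2| := Finset.abs_prod _ _
        _ ≤ ∏ _i : Fin n, (2:ℤ) := Finset.prod_le_prod (fun i _ => abs_nonneg _)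
            (fun i _ => habs i)
        _ = 2 ^ n := by rw [Finset.prod_const, Finset.card_univ, Fintype.card_fin]
  rw [hSN] at hupper
  have : (4:ℤ) ^ n ≤ 2 * N + 2 ^ n := by linarith
  exact_mod_cast this

end Counting


theorem stmt3 (n : ℕ) (hn : 2 ≤ n) (A B : Set (V n)) (hA : IsH1 A) (hB : IsH1 B)
    (hAB : A ⊂ B) :
    (3 / 8 : ℚ) * 4 ^ n ≤ ((B \ A).ncard : ℚ) := by
  classical
  set f : V n → ZMod 2 := ind (B \ A) with hfdef
  have hf : ∀ a b : V n, sform a b = 0 → f (a + b) = f a + f b :=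
    aux_hf hA hB hAB.subset
  obtain ⟨d, hdB, hdA⟩ := Set.exists_of_ssubset hAB
  have hnz : ∃ x, f x ≠ 0 := by
    refine ⟨d, ?_⟩
    rw [hfdef, ind_of_mem (show d ∈ B \ A from ⟨hdB, hdA⟩)]
    decide
  have hcount : 4 ^ n ≤ 2 * (Finset.univ.filter (fun x : V n => f x = 1)).card + 2 ^ n := by
    rcases aux_dichotomy f (by omega) hf with hadd | hquad
    · exact aux_count f 0 (fun j => f (E j))
        (fun x => by rw [zero_mul, zero_add]; exact aux_expand f hadd x) hnz
    · set h : V n → ZMod 2 := fun x => f x + Q0 x with hh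
      have hadd : ∀ a b : V n, h (a + b) = h a + h b := by
        intro a b
        simp only [hh]
        rw [hquad a b, aux_Q0_add]
        have key : ∀ x y s p q : ZMod 2, (x + y + s) + (p + q + s) = (x + p) + (y + q) := by
          decide
        exact key _ _ _ _ _
      have hfx : ∀ x, f x = 1 * Q0 x + ∑ j, x j * h (E j) := by
        intro x
        rw [one_mul, ← aux_expand h hadd x]
        simp only [hh]
        have key : ∀ u v : ZMod 2, u = v + (u + v) := by decide
        exact key _ _
      exact aux_count f 1 (fun j => h (E j)) hfx hnz
  have hset : B \ A = {x | f x = 1} := by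
    ext x
    simp only [Set.mem_setOf_eq, hfdef]
    constructor
    · intro hx; rw [ind_of_mem hx]
    · intro hx
      by_contra hc
      rw [ind_of_not_mem hc] at hx
      exact absurd hx (by decide)
  have hncard : (B \ A).ncard = (Finset.univ.filter (fun x : V n => f x = 1)).card := by
    rw [hset, Set.ncard_eq_toFinset_card', Set.toFinset_setOf]
  rw [hncard] at *
  set N := (Finset.univ.filter (fun x : V n => f x = 1)).card
  have h1 : (4 : ℚ) ^ n ≤ 2 * N + 2 ^ n := by exact_mod_cast hcount
  have h2 : (4 : ℚ) * 2 ^ n ≤ 4 ^ n := by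
    have hnat : 4 * 2 ^ n ≤ 4 ^ n := by
      have e1 : 4 * 2 ^ n = 2 ^ (n + 2) := by rw [pow_add]; ring
      have e2 : (4 : ℕ) ^ n = 2 ^ (2 * n) := by
        rw [pow_mul]; norm_num
      rw [e1, e2]
      exact Nat.pow_le_pow_right (by omega) (by omega)
    exact_mod_cast hnat
  linarith
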